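/- Let m be a positive integer. Consider the quadrics Q_i := x_0·x_i for i = 1, ..., m and Q_{m+1} := x_0^2 in F_q[x_0, ..., x_m]. Then for each r with 1 ≤ r ≤ m+1, the polynomials Q_1, ..., Q_r are linearly independent homogeneous polynomials of degree 2, and |V(Q_1, ..., Q_r)| = p_{m-1} + q^{m-r} for 1 ≤ r ≤ m, while |V(Q_1, ..., Q_{m+1})| = p_{m-1}. -/

import Mathlib

/-- `pj q j` is `p_j = q^j + q^(j-1) + ... + q + 1` for `j ≥ 0` and `p_j = 0` for `j < 0`. -/
def pj (q : ℕ) (j : ℤ) : ℕ := if 0 ≤ j then ∑ i ∈ Finset.range (j.toNat + 1), q ^ i else 0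

/-- The set of points of the projective space `P^{n-1}(F)` at which a (homogeneous)
polynomial `f` in `n` variables vanishes. -/
def projZeros {F : Type*} [Field F] {n : ℕ} (f : MvPolynomial (Fin n) F) :
    Set (Projectivization F (Fin n → F)) :=
  {P | MvPolynomial.eval P.rep f = 0}

open MvPolynomial Finset

lemma geom_nat' (q n : ℕ) (hq : 1 ≤ q) :
    (∑ i ∈ Finset.range n, q ^ i) * (q - 1) = q ^ n - 1 := by
  have h1 : 1 ≤ q ^ n := Nat.one_le_pow _ _ hq
  zify [hq, h1]
  exact geom_sum_mul (q : ℤ) n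

lemma fib_count' {F : Type*} [Field F] [Fintype F] {n : ℕ} (C : (Fin n → F) → Prop)
    (hC : ∀ (c : Fˣ) (v : Fin n → F), C v → C (c • v)) :
    {P : Projectivization F (Fin n → F) | C P.rep}.ncard * (Fintype.card F - 1)
      = {v : Fin n → F | v ≠ 0 ∧ C v}.ncard := by
  classical
  have e : {P : Projectivization F (Fin n → F) | C P.rep} × Fˣ ≃
      {v : Fin n → F | v ≠ 0 ∧ C v} := by
    refine Equiv.ofBijective
      (fun pc => ⟨(pc.2 : Fˣ) • pc.1.1.rep, ?_, hC pc.2 _ pc.1.2⟩) ⟨?_, ?_⟩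
    · intro h
      exact pc.1.1.rep_nonzero
        (by rwa [Units.smul_def, smul_eq_zero, or_iff_right (Units.ne_zero _)] at h)
    · rintro ⟨⟨P, hP⟩, c⟩ ⟨⟨P', hP'⟩, c'⟩ h
      simp only [Subtype.mk.injEq] at h
      have hPP' : P = P' := by
        have h1 : Projectivization.mk F P.rep P.rep_nonzero
            = Projectivization.mk F P'.rep P'.rep_nonzero := by
          rw [Projectivization.mk_eq_mk_iff]
          exact ⟨c⁻¹ * c', by rw [mul_smul, ← h, inv_smul_smul]⟩
        rwa [Projectivization.mk_rep, Projectivization.mk_rep] at h1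
      subst hPP'
      obtain ⟨j, hj⟩ := Function.ne_iff.mp P.rep_nonzero
      have := congr_fun h j
      simp only [Units.smul_def, Pi.smul_apply, smul_eq_mul] at this
      have hcc : c = c' := Units.ext (mul_right_cancel₀ hj this)
      simp [hcc]
    · rintro ⟨v, hv0, hvC⟩
      have h1 : Projectivization.mk F (Projectivization.mk F v hv0).rep
          (Projectivization.mk F v hv0).rep_nonzero = Projectivization.mk F v hv0 :=
        Projectivization.mk_rep _
      rw [Projectivization.mk_eq_mk_iff] at h1
      obtain ⟨a, ha⟩ := h1
      refine ⟨⟨⟨Projectivization.mk F v hv0, ?_⟩, a⁻¹⟩, ?_⟩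
      · show C _
        rw [← ha]; exact hC a v hvC
      · simp only [Subtype.mk.injEq]
        rw [← ha, inv_smul_smul]
  have h1 := Nat.card_congr e
  rw [Nat.card_prod] at h1
  have h2 : Nat.card Fˣ = Fintype.card F - 1 := by
    rw [Nat.card_eq_fintype_card, Fintype.card_units]
  rw [h2] at h1
  rw [← Nat.card_coe_set_eq, ← Nat.card_coe_set_eq]
  exact h1

lemma cardT1' {F : Type*} [Field F] [Fintype F] (n : ℕ) :
    ({v : Fin (n+1) → F | v ≠ 0 ∧ v 0 = 0}).ncard = Fintype.card F ^ n - 1 := by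
  classical
  have e : {v : Fin (n+1) → F | v ≠ 0 ∧ v 0 = 0} ≃ {w : Fin n → F // w ≠ 0} := by
    refine ⟨fun v => ⟨Fin.tail v.1, ?_⟩, fun w => ⟨Fin.cons 0 w.1, ?_, Fin.cons_zero _ _⟩,
      ?_, ?_⟩
    · intro h
      apply v.2.1
      funext i
      refine Fin.cases ?_ ?_ i
      · exact v.2.2
      · intro j; exact congr_fun h j
    · intro h
      apply w.2
      funext j
      have := congr_fun h j.succ
      simpa using this
    · rintro ⟨v, hv⟩
      ext i
      simp only
      refine Fin.cases ?_ ?_ i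
      · simp [hv.2]
      · intro j; simp [Fin.tail]
    · rintro ⟨w, hw⟩
      ext j
      simp [Fin.tail]
  rw [← Nat.card_coe_set_eq, Nat.card_congr e, Nat.card_eq_fintype_card]
  rw [Fintype.card_subtype_compl (p := fun w : Fin n → F => w = 0)]
  simp [Fintype.card_fun]

lemma cardT2' {F : Type*} [Field F] [Fintype F] (m r : ℕ) (hrm : r ≤ m) :
    ({v : Fin (m+1) → F | v 0 ≠ 0 ∧ ∀ i : Fin r, v ⟨(i:ℕ)+1, by omega⟩ = 0}).ncard
      = (Fintype.card F - 1) * Fintype.card F ^ (m - r) := by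
  classical
  have e : {x : F // x ≠ 0} × (Fin (m - r) → F) ≃
      {v : Fin (m+1) → F | v 0 ≠ 0 ∧ ∀ i : Fin r, v ⟨(i:ℕ)+1, by omega⟩ = 0} := by
    refine Equiv.ofBijective (fun p => ⟨fun i => if (i:ℕ) = 0 then p.1.1
      else if h : (i:ℕ) ≤ r then 0 else p.2 ⟨(i:ℕ) - (r+1), by omega⟩, ?_, ?_⟩) ⟨?_, ?_⟩
    · simpa using p.1.2
    · intro i
      have h1 : ¬(((⟨(i:ℕ)+1, by omega⟩ : Fin (m+1)) : ℕ) = 0) := by simp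
      have h2 : ((⟨(i:ℕ)+1, by omega⟩ : Fin (m+1)) : ℕ) ≤ r := by simp
      simp only [h1, if_false, dif_pos h2]
    · intro p p' h
      have hfun := congrArg Subtype.val h
      simp only at hfun
      have h0 := congr_fun hfun 0
      simp only [Fin.val_zero, if_pos rfl] at h0
      have hw : p.2 = p'.2 := by
        funext j
        have hj := congr_fun hfun ⟨r+1+(j:ℕ), by omega⟩
        have hc1 : ¬(((⟨r+1+(j:ℕ), by omega⟩ : Fin (m+1)) : ℕ) = 0) := by simp
        have hc2 : ¬(((⟨r+1+(j:ℕ), by omega⟩ : Fin (m+1)) : ℕ) ≤ r) := by simp; omega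
        simp only [hc1, if_false, dif_neg hc2] at hj
        have hidx : (⟨((⟨r+1+(j:ℕ), by omega⟩ : Fin (m+1)) : ℕ) - (r+1), by omega⟩ :
            Fin (m - r)) = j := by
          apply Fin.ext; simp
        rwa [hidx] at hj
      exact Prod.ext (Subtype.ext h0) hw
    · rintro ⟨v, hv0, hz⟩
      refine ⟨⟨⟨v 0, hv0⟩, fun j => v ⟨r+1+(j:ℕ), by omega⟩⟩, ?_⟩
      apply Subtype.ext
      funext i
      simp only
      by_cases h0 : (i:ℕ) = 0
      · rw [if_pos h0]
        congr 1
        exact (Fin.ext h0.symm : (0 : Fin (m+1)) = i).symm ▸ rfl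
      · rw [if_neg h0]
        by_cases h1 : (i:ℕ) ≤ r
        · rw [dif_pos h1]
          have := hz ⟨(i:ℕ) - 1, by omega⟩
          have hidx : (⟨((⟨(i:ℕ) - 1, by omega⟩ : Fin r) : ℕ) + 1, by omega⟩ : Fin (m+1)) = i := by
            apply Fin.ext; simp; omega
          rw [hidx] at this
          exact this.symm
        · rw [dif_neg h1]
          congr 1
          apply Fin.ext
          simp; omega
  rw [← Nat.card_coe_set_eq, ← Nat.card_congr e, Nat.card_eq_fintype_card,
    Fintype.card_prod, Fintype.card_fun]
  congr 2
  · rw [Fintype.card_subtype_compl (p := fun x : F => x = 0)]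
    simp
  · simp

/-- Consider the quadrics `Q_i = x_0 x_i` for `i = 1, ..., m` and `Q_{m+1} = x_0^2` in
`F_q[x_0, ..., x_m]` (below, `Q` is indexed by `Fin (m+1)`, with `Q ⟨j, _⟩ = Q_{j+1}`).
Then for `1 ≤ r ≤ m + 1` the polynomials `Q_1, ..., Q_r` are linearly independent
homogeneous polynomials of degree `2`, and `|V(Q_1, ..., Q_r)| = p_{m-1} + q^(m-r)` for
`r ≤ m`, while `|V(Q_1, ..., Q_{m+1})| = p_{m-1}`. -/
theorem stmt_10 {F : Type*} [Field F] [Fintype F] (q : ℕ) (hq : q = Fintype.card F)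
    (m : ℕ) (hm : 0 < m) (r : ℕ) (hr : 1 ≤ r) (hrm : r ≤ m + 1)
    (Q : Fin (m + 1) → MvPolynomial (Fin (m + 1)) F)
    (hQ : ∀ j : Fin (m + 1), Q j =
      if h : (j : ℕ) + 1 < m + 1
        then MvPolynomial.X 0 * MvPolynomial.X ⟨(j : ℕ) + 1, h⟩
        else MvPolynomial.X 0 ^ 2) :
    LinearIndependent F (fun i : Fin r => Q (Fin.castLE hrm i)) ∧
    (∀ i : Fin r, (Q (Fin.castLE hrm i)).IsHomogeneous 2) ∧
    (⋂ i : Fin r, projZeros (Q (Fin.castLE hrm i))).ncard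
      = pj q ((m : ℤ) - 1) + (if r ≤ m then q ^ (m - r) else 0) := by
  classical
  refine ⟨?_, ?_, ?_⟩
  · -- linear independence
    set d : Fin r → (Fin (m+1) →₀ ℕ) := fun i =>
      if h : (i:ℕ)+1 < m+1 then Finsupp.single 0 1 + Finsupp.single ⟨(i:ℕ)+1, h⟩ 1
      else Finsupp.single 0 2 with hd
    have key : ∀ i : Fin r, Q (Fin.castLE hrm i) = monomial (d i) 1 := by
      intro i
      rw [hQ, hd]
      simp only [Fin.coe_castLE]
      by_cases h : (i:ℕ)+1 < m+1
      · rw [dif_pos h, dif_pos h, ← pow_one (X (0 : Fin (m+1))),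
          ← pow_one (X (⟨(i:ℕ)+1, h⟩ : Fin (m+1))), X_pow_eq_monomial, X_pow_eq_monomial,
          monomial_mul, one_mul]
      · rw [dif_neg h, dif_neg h, X_pow_eq_monomial]
    have hdinj : Function.Injective d := by
      intro i j hij
      rw [hd] at hij
      simp only at hij
      by_cases hi : (i:ℕ)+1 < m+1 <;> by_cases hj : (j:ℕ)+1 < m+1
      · rw [dif_pos hi, dif_pos hj] at hij
        have := add_left_cancel hij
        have h2 := (Finsupp.single_left_inj (one_ne_zero (α := ℕ))).mp this
        apply Fin.ext
        have := congrArg Fin.val h2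
        simpa using this
      · rw [dif_pos hi, dif_neg hj] at hij
        have := DFunLike.congr_fun hij (0 : Fin (m+1))
        have hne : (⟨(i:ℕ)+1, hi⟩ : Fin (m+1)) ≠ 0 := by
          intro hc; have := congrArg Fin.val hc; simp at this
        rw [Finsupp.add_apply, Finsupp.single_eq_same, Finsupp.single_eq_same,
          Finsupp.single_eq_of_ne' hne] at this
        omega
      · rw [dif_neg hi, dif_pos hj] at hij
        have := DFunLike.congr_fun hij (0 : Fin (m+1))
        have hne : (⟨(j:ℕ)+1, hj⟩ : Fin (m+1)) ≠ 0 := by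
          intro hc; have := congrArg Fin.val hc; simp at this
        rw [Finsupp.add_apply, Finsupp.single_eq_same, Finsupp.single_eq_same,
          Finsupp.single_eq_of_ne' hne] at this
        omega
      · apply Fin.ext; omega
    have li := (basisMonomials (Fin (m+1)) F).linearIndependent.comp d hdinj
    have heq : (fun i : Fin r => Q (Fin.castLE hrm i))
        = (⇑(basisMonomials (Fin (m+1)) F)) ∘ d := by
      funext i
      rw [key i, Function.comp_apply, coe_basisMonomials]
    rw [heq]
    exact li
  · -- homogeneity
    intro i
    rw [hQ]
    by_cases h : ((Fin.castLE hrm i : Fin (m+1)) : ℕ) + 1 < m+1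
    · rw [dif_pos h]
      exact (isHomogeneous_X _ _).mul (isHomogeneous_X _ _)
    · rw [dif_neg h]
      exact isHomogeneous_X_pow _ _
  · -- the point count
    subst hq
    set q := Fintype.card F with hqdef
    have hq2 : 2 ≤ q := Fintype.one_lt_card
    have hqpos : 0 < q - 1 := by omega
    have hpj : pj q ((m : ℤ) - 1) = ∑ i ∈ Finset.range m, q ^ i := by
      have h' : ((m : ℤ) - 1).toNat + 1 = m := by omega
      rw [pj, if_pos (by omega), h']
    by_cases hrm' : r ≤ m
    · -- case r ≤ m
      set C : (Fin (m+1) → F) → Prop :=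
        fun v => ∀ i : Fin r, v 0 * v ⟨(i:ℕ)+1, by omega⟩ = 0 with hCdef
      have hS : (⋂ i : Fin r, projZeros (Q (Fin.castLE hrm i)))
          = {P : Projectivization F (Fin (m+1) → F) | C P.rep} := by
        ext P
        simp only [Set.mem_iInter, projZeros, Set.mem_setOf_eq, hCdef]
        apply forall_congr'
        intro i
        rw [hQ, dif_pos (by rw [Fin.coe_castLE]; omega)]
        rw [map_mul, eval_X, eval_X]
        simp only [Fin.coe_castLE]
      have hC : ∀ (c : Fˣ) (v : Fin (m+1) → F), C v → C (c • v) := by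
        intro c v hv i
        simp only [hCdef, Units.smul_def, Pi.smul_apply, smul_eq_mul] at *
        rw [mul_mul_mul_comm, hv i, mul_zero]
      have main := fib_count' C hC
      have hset : {v : Fin (m+1) → F | v ≠ 0 ∧ C v}
          = {v : Fin (m+1) → F | v ≠ 0 ∧ v 0 = 0}
            ∪ {v : Fin (m+1) → F | v 0 ≠ 0 ∧ ∀ i : Fin r, v ⟨(i:ℕ)+1, by omega⟩ = 0} := by
        ext v
        simp only [Set.mem_setOf_eq, Set.mem_union, hCdef]
        constructor
        · rintro ⟨hv0, hvC⟩
          by_cases h0 : v 0 = 0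
          · exact Or.inl ⟨hv0, h0⟩
          · refine Or.inr ⟨h0, fun i => ?_⟩
            rcases mul_eq_zero.mp (hvC i) with h | h
            · exact absurd h h0
            · exact h
        · rintro (⟨hv0, h0⟩ | ⟨h0, hz⟩)
          · exact ⟨hv0, fun i => by rw [h0, zero_mul]⟩
          · refine ⟨fun hc => h0 (by rw [hc]; rfl), fun i => by rw [hz i, mul_zero]⟩
      have hdisj : Disjoint {v : Fin (m+1) → F | v ≠ 0 ∧ v 0 = 0}
          {v : Fin (m+1) → F | v 0 ≠ 0 ∧ ∀ i : Fin r, v ⟨(i:ℕ)+1, by omega⟩ = 0} := by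
        rw [Set.disjoint_left]
        rintro v ⟨_, h0⟩ ⟨h0', _⟩
        exact h0' h0
      rw [hset, Set.ncard_union_eq hdisj (Set.toFinite _) (Set.toFinite _),
        cardT1', cardT2' m r hrm'] at main
      rw [hS, if_pos hrm', hpj]
      apply Nat.eq_of_mul_eq_mul_right hqpos
      rw [main, add_mul, geom_nat' _ _ (by omega)]
      ring_nf
      rfl
    · -- case r = m + 1
      set C : (Fin (m+1) → F) → Prop := fun v => v 0 = 0 with hCdef
      have hS : (⋂ i : Fin r, projZeros (Q (Fin.castLE hrm i)))
          = {P : Projectivization F (Fin (m+1) → F) | C P.rep} := by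
        ext P
        simp only [Set.mem_iInter, projZeros, Set.mem_setOf_eq, hCdef]
        constructor
        · intro h
          have := h ⟨m, by omega⟩
          rw [hQ, dif_neg (by simp), map_pow, eval_X] at this
          exact (pow_eq_zero_iff two_ne_zero).mp this
        · intro h i
          rw [hQ]
          by_cases hcase : ((Fin.castLE hrm i : Fin (m+1)) : ℕ) + 1 < m + 1
          · rw [dif_pos hcase, map_mul, eval_X, h, zero_mul]
          · rw [dif_neg hcase, map_pow, eval_X, h]
            exact zero_pow two_ne_zero
      have hC : ∀ (c : Fˣ) (v : Fin (m+1) → F), C v → C (c • v) := by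
        intro c v hv
        simp only [hCdef, Units.smul_def, Pi.smul_apply, smul_eq_mul] at *
        rw [hv, mul_zero]
      have main := fib_count' C hC
      rw [cardT1'] at main
      rw [hS, if_neg hrm', hpj, add_zero]
      apply Nat.eq_of_mul_eq_mul_right hqpos
      rw [main, geom_nat' _ _ (by omega)]
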